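/- For fixed η > 1, as m → ∞ with n = ⌈η·m⌉: (1/m)·Σ_{ℓ=0}^{m−1} ψ(n−ℓ) = (η−1)·ln(η/(η−1)) + ln(n) − 1 + O(1/m), where ψ(k) = −γ + Σ_{j=1}^{k−1} 1/j. -/

import Mathlib

open Finset

/-- Summation formula for harmonic numbers: `∑_{k<K} H_k = K·H_K − K`. -/
lemma sum_harmonic_eq (K : ℕ) :
    ∑ k ∈ Finset.range K, harmonic k = K * harmonic K - K := by
  induction K with
  | zero => simp
  | succ K ih =>
    rw [Finset.sum_range_succ, ih, harmonic_succ]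
    have h : ((K : ℚ) + 1) ≠ 0 := by positivity
    push_cast
    field_simp
    ring

/-- Two-sided bound `0 ≤ H_k − log k − γ ≤ 1/k` for `k ≥ 1`. -/
lemma harmonic_sub_log_bounds (k : ℕ) (hk : 1 ≤ k) :
    0 ≤ ((harmonic k : ℚ) : ℝ) - Real.log k - Real.eulerMascheroniConstant ∧
      ((harmonic k : ℚ) : ℝ) - Real.log k - Real.eulerMascheroniConstant ≤ 1 / k := by
  have hk0 : (0 : ℝ) < k := by exact_mod_cast hk
  have hkne : k ≠ 0 := by omega
  have h1 := Real.eulerMascheroniConstant_lt_eulerMascheroniSeq' k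
  rw [Real.eulerMascheroniSeq', if_neg hkne] at h1
  have h2 := Real.eulerMascheroniSeq_lt_eulerMascheroniConstant k
  rw [Real.eulerMascheroniSeq] at h2
  have hlog : Real.log ((k : ℝ) + 1) - Real.log k ≤ 1 / k := by
    rw [← Real.log_div (by positivity) (by positivity)]
    have h3 := Real.log_le_sub_one_of_pos (show (0 : ℝ) < ((k : ℝ) + 1) / k by positivity)
    have h4 : ((k : ℝ) + 1) / k - 1 = 1 / k := by field_simp; ring
    linarith
  exact ⟨by linarith, by linarith⟩

/-- Lemma 2 of the paper: for fixed `η > 1` and `n = ⌈η·m⌉`,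
`(1/m)·Σ_{ℓ=0}^{m−1} ψ(n−ℓ) = (η−1)·ln(η/(η−1)) + ln n − 1 + O(1/m)` as `m → ∞`,
where `ψ(k) = −γ + Σ_{j=1}^{k−1} 1/j`. -/
theorem wishart_logdet_asymptotic (ψ : ℕ → ℝ)
    (hψ : ∀ k : ℕ, ψ k = -Real.eulerMascheroniConstant + ∑ j ∈ Finset.Icc 1 (k - 1), (1 : ℝ) / j)
    (η : ℝ) (hη : 1 < η) :
    ∃ C : ℝ, 0 < C ∧ ∃ N : ℕ, ∀ m : ℕ, N ≤ m →
      |(1 / (m : ℝ)) * ∑ ℓ ∈ Finset.range m, ψ (⌈η * m⌉₊ - ℓ)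
        - ((η - 1) * Real.log (η / (η - 1)) + Real.log (⌈η * m⌉₊) - 1)| ≤ C / m := by
  have hu0 : (0 : ℝ) < η - 1 := by linarith
  set γ := Real.eulerMascheroniConstant with hγ
  set K : ℝ := 1 / (η - 1) + 1 with hK
  have hK0 : 0 < K := by positivity
  refine ⟨K + 2, by positivity, ⌈1 / (η - 1)⌉₊ + 1, fun m hm => ?_⟩
  -- basic facts about m and n
  have hm1 : 1 ≤ m := le_trans (Nat.le_add_left 1 _) hm
  have hmR : (0 : ℝ) < m := by exact_mod_cast hm1
  have hmub : 1 / (η - 1) ≤ (m : ℝ) := by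
    calc 1 / (η - 1) ≤ (⌈1 / (η - 1)⌉₊ : ℝ) := Nat.le_ceil _
    _ ≤ m := by exact_mod_cast le_trans (Nat.le_succ _) hm
  set n : ℕ := ⌈η * m⌉₊ with hn
  have hn_ge : η * m ≤ (n : ℝ) := Nat.le_ceil _
  have hn_lt : (n : ℝ) < η * m + 1 := Nat.ceil_lt_add_one (by positivity)
  have hem : 1 ≤ (η - 1) * m := by
    rw [div_le_iff₀ hu0] at hmub
    nlinarith [hmub]
  have hnm : m + 1 ≤ n := by
    have : ((m : ℝ) + 1) ≤ (n : ℝ) := by nlinarith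
    exact_mod_cast this
  set b : ℕ := n - m with hb
  have hb1 : 1 ≤ b := by omega
  have hbm : n = b + m := by omega
  have hbR : (0 : ℝ) < b := by exact_mod_cast hb1
  have hnR : (0 : ℝ) < n := by positivity
  have hbcast : (b : ℝ) = (n : ℝ) - m := by
    rw [hb, Nat.cast_sub (by omega)]
  -- Step A: rewrite ψ via harmonic numbers
  have hψsum : ∀ ℓ ∈ Finset.range m, ψ (n - ℓ) = -γ + ((harmonic (n - ℓ - 1) : ℚ) : ℝ) := by
    intro ℓ hℓ
    rw [hψ, harmonic_eq_sum_Icc]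
    push_cast
    simp [one_div]
  -- Step B: reindex and sum the harmonic numbers
  set Hr : ℕ → ℝ := fun k => ((harmonic k : ℚ) : ℝ) with hHr
  have hreflect : ∑ ℓ ∈ Finset.range m, Hr (n - ℓ - 1) = ∑ i ∈ Finset.range m, Hr (b + i) := by
    rw [← Finset.sum_range_reflect (fun i => Hr (b + i)) m]
    refine Finset.sum_congr rfl fun j hj => ?_
    rw [Finset.mem_range] at hj
    congr 1
    omega
  have hsplit : ∑ k ∈ Finset.range n, Hr k
      = ∑ k ∈ Finset.range b, Hr k + ∑ i ∈ Finset.range m, Hr (b + i) := by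
    rw [hbm]
    exact Finset.sum_range_add Hr b m
  have hW : ∀ J : ℕ, ∑ k ∈ Finset.range J, Hr k = (J : ℝ) * Hr J - J := by
    intro J
    have := sum_harmonic_eq J
    have h2 : ((∑ k ∈ Finset.range J, harmonic k : ℚ) : ℝ) = ((J : ℚ) * harmonic J - J : ℚ) := by
      exact_mod_cast congrArg (fun q : ℚ => (q : ℝ)) this
    push_cast at h2
    simpa [hHr] using h2
  have hsum : ∑ ℓ ∈ Finset.range m, ψ (n - ℓ)
      = -(m : ℝ) * γ + ((n : ℝ) * Hr n - (b : ℝ) * Hr b - m) := by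
    rw [Finset.sum_congr rfl hψsum, Finset.sum_add_distrib, Finset.sum_const, Finset.card_range]
    have : ∑ ℓ ∈ Finset.range m, Hr (n - ℓ - 1) = (n : ℝ) * Hr n - (b : ℝ) * Hr b - m := by
      rw [hreflect]
      have := hsplit
      rw [hW n, hW b] at this
      have hmcast : (n : ℝ) = (b : ℝ) + m := by exact_mod_cast hbm
      linarith
    rw [this]
    ring
  -- Step C: error terms from the harmonic-log-γ bounds
  obtain ⟨hr0, hr1⟩ := harmonic_sub_log_bounds n (by omega)
  obtain ⟨hs0, hs1⟩ := harmonic_sub_log_bounds b hb1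
  set r : ℝ := Hr n - Real.log n - γ with hrdef
  set s : ℝ := Hr b - Real.log b - γ with hsdef
  have hHn : Hr n = Real.log n + γ + r := by rw [hrdef]; ring
  have hHb : Hr b = Real.log b + γ + s := by rw [hsdef]; ring
  -- Step D: the Lipschitz function g
  set t : ℝ := (b : ℝ) / m with ht
  set g : ℝ → ℝ := fun x => x * (Real.log (x + 1) - Real.log x) with hg
  have hm1R : (1 : ℝ) ≤ m := by exact_mod_cast hm1
  have ht_mem : t ∈ Set.Icc (η - 1) η := by
    constructor
    · rw [ht, le_div_iff₀ hmR]
      linarith [hbcast, hn_ge]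
    · rw [ht, div_le_iff₀ hmR]
      linarith [hbcast, hn_lt, hm1R]
  have hu_mem : (η - 1) ∈ Set.Icc (η - 1) η := ⟨le_refl _, by linarith⟩
  have htu : |t - (η - 1)| ≤ 1 / m := by
    rw [abs_le]
    constructor
    · have := ht_mem.1
      have h1m : 0 < 1 / (m : ℝ) := by positivity
      linarith
    · rw [ht, sub_le_iff_le_add, div_le_iff₀ hmR]
      have hq : (1 / (m : ℝ) + (η - 1)) * m = 1 + (η - 1) * m := by
        field_simp
      rw [hq]
      linarith [hbcast, hn_lt]
  -- MVT bound for g on [η-1, η]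
  have hglip : ∀ x ∈ Set.Icc (η - 1) η, ∀ y ∈ Set.Icc (η - 1) η, |g x - g y| ≤ K * |x - y| := by
    intro x hx y hy
    have key : ∀ z ∈ Set.Icc (η - 1) η,
        HasDerivWithinAt g (Real.log (z + 1) - Real.log z - (z + 1)⁻¹) (Set.Icc (η - 1) η) z := by
      intro z hz
      have hz0 : 0 < z := lt_of_lt_of_le hu0 hz.1
      have hz1 : 0 < z + 1 := by linarith
      have h1 : HasDerivAt (fun w : ℝ => Real.log (w + 1)) (1 / (z + 1)) z := by
        have := ((hasDerivAt_id z).add_const 1).log hz1.ne'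
        simpa using this
      have h2 : HasDerivAt Real.log z⁻¹ z := Real.hasDerivAt_log hz0.ne'
      have h3 := (hasDerivAt_id z).mul (h1.sub h2)
      have h4 : HasDerivAt (fun w : ℝ => w * (Real.log (w + 1) - Real.log w))
          (Real.log (z + 1) - Real.log z - (z + 1)⁻¹) z := by
        refine h3.congr_deriv ?_
        have e : (z + 1) * (z + 1)⁻¹ = 1 := mul_inv_cancel₀ hz1.ne'
        have e2 : z * z⁻¹ = 1 := mul_inv_cancel₀ hz0.ne'
        simp only [id_eq, one_div, Pi.sub_apply]
        linear_combination e - e2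
      exact h4.hasDerivWithinAt
    have bound : ∀ z ∈ Set.Icc (η - 1) η,
        ‖Real.log (z + 1) - Real.log z - (z + 1)⁻¹‖ ≤ K := by
      intro z hz
      have hz0 : 0 < z := lt_of_lt_of_le hu0 hz.1
      have hz1 : 0 < z + 1 := by linarith
      have hA0 : 0 ≤ Real.log (z + 1) - Real.log z := by
        have := Real.log_le_log hz0 (by linarith : z ≤ z + 1)
        linarith
      have hA1 : Real.log (z + 1) - Real.log z ≤ 1 / z := by
        rw [← Real.log_div hz1.ne' hz0.ne']
        have h3 := Real.log_le_sub_one_of_pos (show (0 : ℝ) < (z + 1) / z by positivity)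
        have h4 : (z + 1) / z - 1 = 1 / z := by field_simp; ring
        linarith
      have hA2 : 1 / z ≤ 1 / (η - 1) := by
        apply one_div_le_one_div_of_le hu0 hz.1
      have hB0 : 0 < (z + 1)⁻¹ := by positivity
      have hB1 : (z + 1)⁻¹ ≤ 1 := by
        have h5 : (1 : ℝ) ≤ z + 1 := by linarith
        calc (z + 1)⁻¹ ≤ 1⁻¹ := by
              apply inv_anti₀ one_pos h5
        _ = 1 := inv_one
      rw [Real.norm_eq_abs, abs_le, hK]
      constructor <;> linarith
    have := (convex_Icc (η - 1) η).norm_image_sub_le_of_norm_hasDerivWithin_le key bound hy hx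
    simpa [Real.norm_eq_abs] using this
  have hgt : |g t - g (η - 1)| ≤ K / m := by
    calc |g t - g (η - 1)| ≤ K * |t - (η - 1)| := hglip t ht_mem _ hu_mem
    _ ≤ K * (1 / m) := by
        apply mul_le_mul_of_nonneg_left htu hK0.le
    _ = K / m := by ring
  -- key algebraic identity
  have hlogn : Real.log (t + 1) = Real.log n - Real.log m := by
    have h1 : t + 1 = (n : ℝ) / m := by
      rw [ht]
      field_simp
      linarith [hbcast]
    rw [h1, Real.log_div hnR.ne' hmR.ne']
  have hlogb : Real.log t = Real.log b - Real.log m := by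
    rw [ht, Real.log_div hbR.ne' hmR.ne']
  have hgu : g (η - 1) = (η - 1) * Real.log (η / (η - 1)) := by
    rw [hg]
    simp only [sub_add_cancel]
    rw [Real.log_div (by positivity) hu0.ne']
  have hncast : (n : ℝ) = (b : ℝ) + m := by exact_mod_cast hbm
  have hgteq : g t = t * (Real.log n - Real.log b) := by
    rw [hg]
    simp only
    rw [hlogn, hlogb]
    ring
  have key : (1 / (m : ℝ)) * ∑ ℓ ∈ Finset.range m, ψ (n - ℓ)
      - ((η - 1) * Real.log (η / (η - 1)) + Real.log n - 1)
      = (g t - g (η - 1)) + ((n : ℝ) * r - (b : ℝ) * s) / m := by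
    rw [hsum, hHn, hHb, hgteq, hgu, ht, hncast]
    field_simp
    ring
  -- final estimate
  have hnr : (n : ℝ) * r ≤ 1 := by
    calc (n : ℝ) * r ≤ (n : ℝ) * (1 / n) := by
          apply mul_le_mul_of_nonneg_left hr1 hnR.le
    _ = 1 := by field_simp
  have hbs : (b : ℝ) * s ≤ 1 := by
    calc (b : ℝ) * s ≤ (b : ℝ) * (1 / b) := by
          apply mul_le_mul_of_nonneg_left hs1 hbR.le
    _ = 1 := by field_simp
  have hnr0 : 0 ≤ (n : ℝ) * r := mul_nonneg hnR.le hr0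
  have hbs0 : 0 ≤ (b : ℝ) * s := mul_nonneg hbR.le hs0
  have herr : |((n : ℝ) * r - (b : ℝ) * s) / m| ≤ 2 / m := by
    rw [abs_div, abs_of_pos hmR]
    gcongr
    rw [abs_le]
    constructor <;> linarith
  calc |(1 / (m : ℝ)) * ∑ ℓ ∈ Finset.range m, ψ (n - ℓ)
      - ((η - 1) * Real.log (η / (η - 1)) + Real.log n - 1)|
      = |(g t - g (η - 1)) + ((n : ℝ) * r - (b : ℝ) * s) / m| := by rw [key]
    _ ≤ |g t - g (η - 1)| + |((n : ℝ) * r - (b : ℝ) * s) / m| := abs_add_le _ _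
    _ ≤ K / m + 2 / m := add_le_add hgt herr
    _ = (K + 2) / m := by ring
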